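/- Let k ≥ 4 be even and l even with k/2 < l < k and l not dividing k, and let a > γ_{lk} where γ_{lk} is the Kohn-Nirenberg constant. Then the function P(z) = |z|^k + a|z|^{k-l} Re(z^l) is not convex on ℂ ≅ ℝ²; i.e. there exists a point z₀ ≠ 0 at which the real Hessian of P has a negative eigenvalue. -/

import Mathlib

open Set Filter Topology

private theorem aux_re {g : ℝ → ℂ} {g' : ℂ} {t : ℝ} (h : HasDerivAt g g' t) :
    HasDerivAt (fun s => (g s).re) g'.re t :=
  Complex.reCLM.hasFDerivAt.comp_hasDerivAt t h

set_option maxHeartbeats 1000000 in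
/-- For even `k ≥ 4`, even `l` with `k/2 < l < k` and `l ∤ k`,
and `a > γ_{lk}`, the function `P(z) = |z|^k + a|z|^{k-l} Re(z^l)` is not
convex on `ℂ ≅ ℝ²`. -/
theorem stmt_13 (k l : ℕ) (hk : Even k) (hk4 : 4 ≤ k) (hl : Even l)
    (hl1 : k / 2 < l) (hl2 : l < k) (hnd : ¬ l ∣ k)
    (γ : ℝ)
    (hγ : γ = if 3 * (k : ℝ) - 2 ≤ (l : ℝ) ^ 2 then (k : ℝ) / ((l : ℝ) ^ 2 - k)
      else Real.sqrt ((4 * (k : ℝ) - (l : ℝ) ^ 2 - 4) * (k : ℝ) ^ 2 /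
        ((4 * (k : ℝ) - 4) * ((k : ℝ) ^ 2 - (l : ℝ) ^ 2))))
    (a : ℝ) (ha : γ < a) :
    ¬ ConvexOn ℝ Set.univ
      (fun z : ℂ => ‖z‖ ^ k +
        a * ‖z‖ ^ (k - l) * (z ^ l).re) := by
  have hkl_even : Even (k - l) := (Nat.even_sub hl2.le).mpr (iff_of_true hk hl)
  obtain ⟨m, hm⟩ := hk
  obtain ⟨m', hm'⟩ := hkl_even
  have hm2 : m < l := by omega
  -- the key natural-number inequality : 3k ≤ l² + 2
  have hnat : 3 * k ≤ l ^ 2 + 2 := by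
    rcases Nat.even_or_odd m with he | ho
    · have hlm : m + 2 ≤ l := by
        rcases he with ⟨j, hj⟩
        rcases hl with ⟨i, hi⟩
        omega
      nlinarith
    · have hm3 : 3 ≤ m := by
        rcases ho with ⟨j, hj⟩
        omega
      nlinarith
  have hcase : 3 * (k : ℝ) - 2 ≤ (l : ℝ) ^ 2 := by
    have := (Nat.cast_le (α := ℝ)).mpr hnat
    push_cast at this
    linarith
  have hlk : (k : ℝ) < (l : ℝ) ^ 2 := by
    have : (4 : ℝ) ≤ (k : ℝ) := by exact_mod_cast hk4
    linarith
  have hγ' : γ = (k : ℝ) / ((l : ℝ) ^ 2 - k) := by rw [hγ, if_pos hcase]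
  have haK : (k : ℝ) < a * ((l : ℝ) ^ 2 - k) := by
    have h0 : (0 : ℝ) < (l : ℝ) ^ 2 - k := by linarith
    have ha' := ha
    rw [hγ'] at ha'
    calc (k : ℝ) = ((k : ℝ) / ((l : ℝ) ^ 2 - k)) * ((l : ℝ) ^ 2 - k) := by
          field_simp
      _ < a * ((l : ℝ) ^ 2 - k) := mul_lt_mul_of_pos_right ha' h0
  have hS : (k : ℝ) + a * ((k : ℝ) - (l : ℝ) ^ 2) < 0 := by nlinarith
  intro h
  set P : ℂ → ℝ := fun z => ‖z‖ ^ k +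
      a * ‖z‖ ^ (k - l) * (z ^ l).re with hP
  set L : ℝ →ᵃ[ℝ] ℂ := AffineMap.lineMap (1 : ℂ) (1 + Complex.I) with hL
  have hLt : ∀ t : ℝ, L t = 1 + t • Complex.I := by
    intro t
    simp [hL, AffineMap.lineMap_apply]
    ring
  have hconv : ConvexOn ℝ Set.univ (P ∘ L) := by
    simpa using h.comp_affineMap L
  set C : ℝ → ℂ := fun t => 1 + t • Complex.I with hCdef
  set f : ℝ → ℝ := fun t =>
      (1 + t ^ 2) ^ m + a * ((1 + t ^ 2) ^ m' * ((C t) ^ l).re) with hfdef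
  have hnormSq : ∀ t : ℝ, Complex.normSq (C t) = 1 + t ^ 2 := by
    intro t
    simp [hCdef, Complex.normSq_apply, Complex.add_re, Complex.add_im,
      Complex.real_smul, Complex.one_re, Complex.one_im]
    ring
  have hPL : ∀ t : ℝ, (P ∘ L) t = f t := by
    intro t
    have h1 : ‖C t‖ ^ k = (1 + t ^ 2) ^ m := by
      rw [show k = 2 * m by omega, pow_mul, Complex.sq_norm, hnormSq]
    have h2 : ‖C t‖ ^ (k - l) = (1 + t ^ 2) ^ m' := by
      rw [show k - l = 2 * m' by omega, pow_mul, Complex.sq_norm, hnormSq]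
    simp only [Function.comp_apply, hLt, hP]
    rw [show (1 : ℂ) + t • Complex.I = C t from rfl, h1, h2, hfdef]
    ring
  -- first derivative
  have hC : ∀ t : ℝ, HasDerivAt C Complex.I t := by
    intro t
    have := ((hasDerivAt_id t).smul_const Complex.I).const_add (1 : ℂ)
    simpa [hCdef] using this
  have hN : ∀ t : ℝ, HasDerivAt (fun s : ℝ => 1 + s ^ 2) (2 * t) t := by
    intro t
    have := (hasDerivAt_pow 2 t).const_add (1 : ℝ)
    simpa using this
  have hCl : ∀ t : ℝ, HasDerivAt (fun s : ℝ => (C s) ^ l)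
      (Complex.I • ((l : ℂ) * (C t) ^ (l - 1))) t := by
    intro t
    exact (hasDerivAt_pow l (C t)).scomp t (hC t)
  have hRe : ∀ t : ℝ, HasDerivAt (fun s : ℝ => ((C s) ^ l).re)
      ((Complex.I • ((l : ℂ) * (C t) ^ (l - 1))).re) t :=
    fun t => aux_re (hCl t)
  set f' : ℝ → ℝ := fun t =>
      (m : ℝ) * (1 + t ^ 2) ^ (m - 1) * (2 * t) +
      a * (((m' : ℝ) * (1 + t ^ 2) ^ (m' - 1) * (2 * t)) * ((C t) ^ l).re +
        (1 + t ^ 2) ^ m' * (Complex.I • ((l : ℂ) * (C t) ^ (l - 1))).re) with hf'def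
  have hf : ∀ t : ℝ, HasDerivAt f (f' t) t := by
    intro t
    exact ((hN t).pow m).add ((((hN t).pow m').mul (hRe t)).const_mul a)
  -- second derivative at 0
  have hA2 : HasDerivAt (fun t : ℝ => 2 * t) 2 (0:ℝ) := by
    simpa using (hasDerivAt_id (0:ℝ)).const_mul (2:ℝ)
  have hA : HasDerivAt (fun t : ℝ => (m : ℝ) * (1 + t ^ 2) ^ (m - 1) * (2 * t))
      (((m : ℝ) * (((m-1 : ℕ) : ℝ) * (1 + (0:ℝ) ^ 2) ^ (m - 1 - 1) * (2 * 0))) * (2 * 0) +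
        ((m : ℝ) * (1 + (0:ℝ) ^ 2) ^ (m - 1)) * 2) (0:ℝ) :=
    (((hN 0).pow (m-1)).const_mul (m : ℝ)).mul hA2
  have hB : HasDerivAt
      (fun t : ℝ => ((m' : ℝ) * (1 + t ^ 2) ^ (m' - 1) * (2 * t)) * ((C t) ^ l).re)
      ((((m' : ℝ) * (((m'-1 : ℕ) : ℝ) * (1 + (0:ℝ) ^ 2) ^ (m' - 1 - 1) * (2 * 0))) * (2 * 0) +
        ((m' : ℝ) * (1 + (0:ℝ) ^ 2) ^ (m' - 1)) * 2) * ((C 0) ^ l).re +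
        ((m' : ℝ) * (1 + (0:ℝ) ^ 2) ^ (m' - 1) * (2 * 0)) *
          (Complex.I • ((l : ℂ) * (C 0) ^ (l - 1))).re) (0:ℝ) :=
    ((((hN 0).pow (m'-1)).const_mul (m' : ℝ)).mul hA2).mul (hRe 0)
  have hR'0 : HasDerivAt (fun t : ℝ => (Complex.I • ((l : ℂ) * (C t) ^ (l - 1))).re)
      ((Complex.I • ((l : ℂ) *
        (Complex.I • (((l-1 : ℕ) : ℂ) * (C 0) ^ (l - 1 - 1))))).re) (0:ℝ) := by
    have h1 : HasDerivAt (fun s : ℝ => (C s) ^ (l - 1))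
        (Complex.I • (((l-1 : ℕ) : ℂ) * (C 0) ^ (l - 1 - 1))) 0 :=
      (hasDerivAt_pow (l - 1) (C 0)).scomp 0 (hC 0)
    exact aux_re ((h1.const_mul ((l : ℂ))).const_smul Complex.I)
  have hCc : HasDerivAt
      (fun t : ℝ => (1 + t ^ 2) ^ m' * (Complex.I • ((l : ℂ) * (C t) ^ (l - 1))).re)
      (((m' : ℝ) * (1 + (0:ℝ) ^ 2) ^ (m' - 1) * (2 * 0)) *
          (Complex.I • ((l : ℂ) * (C 0) ^ (l - 1))).re +
        (1 + (0:ℝ) ^ 2) ^ m' * (Complex.I • ((l : ℂ) *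
          (Complex.I • (((l-1 : ℕ) : ℂ) * (C 0) ^ (l - 1 - 1))))).re) (0:ℝ) :=
    ((hN 0).pow m').mul hR'0
  have hfpp : HasDerivAt f' ((k : ℝ) + a * ((k : ℝ) - (l : ℝ) ^ 2)) 0 := by
    refine (hA.add ((hB.add hCc).const_mul a)).congr_deriv ?_
    have hC0 : C 0 = 1 := by simp [hCdef]
    have c1 : (k : ℝ) = 2 * m := by
      have : (k : ℕ) = 2 * m := by omega
      exact_mod_cast this
    have c2 : (k : ℝ) - l = 2 * m' := by
      have h3 : ((k - l : ℕ) : ℝ) = 2 * m' := by exact_mod_cast (show k - l = 2 * m' by omega)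
      rw [Nat.cast_sub hl2.le] at h3
      linarith
    have c3 : ((l - 1 : ℕ) : ℝ) = (l : ℝ) - 1 := by
      rw [Nat.cast_sub (by omega : 1 ≤ l)]
      norm_num
    have hre1 : ((C 0 : ℂ) ^ l).re = 1 := by rw [hC0]; simp
    have hre2 : (Complex.I • ((l : ℂ) * (C 0) ^ (l - 1))).re = 0 := by
      rw [hC0]; simp
    have hre3 : (Complex.I • ((l : ℂ) *
        (Complex.I • (((l-1 : ℕ) : ℂ) * (C 0) ^ (l - 1 - 1))))).re
        = -((l : ℝ) * ((l : ℝ) - 1)) := by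
      rw [hC0, one_pow, smul_eq_mul, smul_eq_mul, mul_one]
      rw [show Complex.I * ((l : ℂ) * (Complex.I * ((l - 1 : ℕ) : ℂ)))
          = -((((l : ℝ) * ((l : ℝ) - 1) : ℝ)) : ℂ) by
        push_cast [Nat.cast_sub (by omega : 1 ≤ l)]
        ring_nf
        rw [Complex.I_sq]
        ring]
      rw [Complex.neg_re, Complex.ofReal_re]
    rw [hre1, hre2, hre3]
    simp only [mul_zero, zero_mul, add_zero, zero_add, one_pow, mul_one, one_mul]
    linear_combination (-1 : ℝ) * c1 - a * c2
  -- the symmetrized function g and its derivative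
  set g : ℝ → ℝ := fun t => f t + f (-t) - 2 * f 0 with hgdef
  set G : ℝ → ℝ := fun t => f' t + f' (-t) * (-1) with hGdef
  have hg : ∀ t : ℝ, HasDerivAt g (G t) t := by
    intro t
    have hneg : HasDerivAt (fun s : ℝ => f (-s)) (f' (-t) * (-1)) t :=
      (hf (-t)).comp t (hasDerivAt_neg' t)
    exact ((hf t).add hneg).sub_const (2 * f 0)
  have hgG : HasDerivAt G (2 * ((k : ℝ) + a * ((k : ℝ) - (l : ℝ) ^ 2))) 0 := by
    have hneg : HasDerivAt (fun s : ℝ => f' (-s) * (-1))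
        (((k : ℝ) + a * ((k : ℝ) - (l : ℝ) ^ 2)) * (-1) * (-1)) 0 :=
      (hfpp.comp_of_eq (0:ℝ) (hasDerivAt_neg' 0) (by norm_num)).mul_const (-1 : ℝ)
    exact (hfpp.add hneg).congr_deriv (by ring)
  clear_value P L C f f' g G
  have hG0 : G 0 = 0 := by
    simp only [hGdef, neg_zero]
    ring
  have hg0 : g 0 = 0 := by
    simp only [hgdef, neg_zero]
    ring
  -- midpoint convexity inequality
  have key : ∀ t : ℝ, 0 ≤ g t := by
    intro t
    have h2 := hconv.2 (mem_univ t) (mem_univ (-t))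
      (by norm_num : (0:ℝ) ≤ 1/2) (by norm_num : (0:ℝ) ≤ 1/2) (by norm_num)
    simp only [smul_eq_mul] at h2
    rw [show (1/2 : ℝ) * t + 1/2 * (-t) = 0 by ring] at h2
    rw [hPL, hPL, hPL] at h2
    simp only [hgdef]
    linarith
  -- slope argument: G is negative just right of 0
  set W : ℝ := 2 * ((k : ℝ) + a * ((k : ℝ) - (l : ℝ) ^ 2)) with hWdef
  have hW : W < 0 := by rw [hWdef]; linarith
  clear_value W
  have hslope := hasDerivAt_iff_tendsto_slope.mp hgG
  have hev : ∀ᶠ t in 𝓝[>] (0:ℝ), slope G 0 t < W / 2 := by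
    have := hslope.eventually_lt_const (by linarith : W < W / 2)
    exact this.filter_mono (nhdsWithin_mono 0 (fun x hx => ne_of_gt hx))
  obtain ⟨u, hu0, hu⟩ : ∃ u, 0 < u ∧ ∀ t ∈ Ioo (0:ℝ) u, slope G 0 t < W / 2 := by
    rcases mem_nhdsGT_iff_exists_Ioo_subset.mp hev with ⟨u, hu1, hu2⟩
    exact ⟨u, hu1, fun t ht => hu2 ht⟩
  have hGneg : ∀ t ∈ Ioo (0:ℝ) u, G t < 0 := by
    intro t ht
    have h1 := hu t ht
    rw [slope_def_field, hG0] at h1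
    have ht0 : 0 < t := ht.1
    have h2 := (div_lt_iff₀ (by linarith : (0:ℝ) < t - 0)).mp h1
    have h3 : W / 2 * (t - 0) < 0 :=
      mul_neg_of_neg_of_pos (by linarith) (by linarith)
    linarith
  have hcont : ContinuousOn g (Icc 0 u) :=
    (continuous_iff_continuousAt.mpr fun t => (hg t).differentiableAt.continuousAt).continuousOn
  have hanti : StrictAntiOn g (Icc 0 u) := by
    refine strictAntiOn_of_deriv_neg (convex_Icc 0 u) hcont ?_
    intro x hx
    rw [interior_Icc] at hx
    rw [(hg x).deriv]
    exact hGneg x hx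
  have hmem1 : (0:ℝ) ∈ Icc (0:ℝ) u := ⟨le_refl _, le_of_lt hu0⟩
  have hmem2 : u / 2 ∈ Icc (0:ℝ) u := ⟨by linarith, by linarith⟩
  have hlt := hanti hmem1 hmem2 (by linarith : (0:ℝ) < u / 2)
  rw [hg0] at hlt
  linarith [key (u / 2)]
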